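/- There is no twice differentiable function u : [0, ∞) → ℝ satisfying u''(r) = (3/4)(u(r)^{−1/3} − u(r)) for all r ≥ 0, with 0 < u(r) < 1 for all r ≥ 0 and u'(0) > 0. -/

import Mathlib

/-- There is no twice differentiable `u : [0, ∞) → ℝ` with
`u'' = (3/4)(u^{-1/3} - u)`, `0 < u < 1` everywhere, and `u'(0) > 0`. -/
theorem stmt_6 :
    ¬ ∃ u u' u'' : ℝ → ℝ,
      (∀ r ∈ Set.Ici (0 : ℝ), HasDerivWithinAt u (u' r) (Set.Ici 0) r) ∧
      (∀ r ∈ Set.Ici (0 : ℝ), HasDerivWithinAt u' (u'' r) (Set.Ici 0) r) ∧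
      (∀ r ∈ Set.Ici (0 : ℝ),
        u'' r = (3 / 4) * ((u r) ^ (-(1 : ℝ) / 3) - u r)) ∧
      (∀ r ∈ Set.Ici (0 : ℝ), 0 < u r ∧ u r < 1) ∧
      0 < u' 0 := by
  rintro ⟨u, u', u'', hu, hu', heq, hbnd, hpos⟩
  have hint : interior (Set.Ici (0:ℝ)) = Set.Ioi 0 := interior_Ici
  -- u'' is nonneg on Ici 0
  have h2nonneg : ∀ r ∈ Set.Ici (0:ℝ), 0 ≤ u'' r := by
    intro r hr
    rw [heq r hr]
    have h01 := hbnd r hr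
    have : 1 < (u r) ^ (-(1 : ℝ) / 3) := by
      rw [Real.one_lt_rpow_iff_of_pos h01.1]
      right
      exact ⟨h01.2, by norm_num⟩
    nlinarith [h01.2]
  -- u' is monotone on Ici 0
  have hmono' : MonotoneOn u' (Set.Ici 0) := by
    apply monotoneOn_of_hasDerivWithinAt_nonneg (convex_Ici 0)
      (f' := u'')
    · exact fun r hr => (hu' r hr).continuousWithinAt
    · intro x hx
      rw [hint] at hx ⊢
      exact (hu' x (Set.Ioi_subset_Ici_self hx)).mono Set.Ioi_subset_Ici_self
    · intro x hx
      rw [hint] at hx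
      exact h2nonneg x (Set.Ioi_subset_Ici_self hx)
  -- so u' r ≥ u' 0 > 0 for r ≥ 0
  have hd : ∀ r ∈ Set.Ici (0:ℝ), 0 ≤ u' r - u' 0 := by
    intro r hr
    have := hmono' (Set.self_mem_Ici) hr hr
    linarith
  -- g(r) = u r - u' 0 * r is monotone
  have hmonog : MonotoneOn (fun r => u r - u' 0 * r) (Set.Ici 0) := by
    apply monotoneOn_of_hasDerivWithinAt_nonneg (convex_Ici 0)
      (f' := fun r => u' r - u' 0)
    · exact fun r hr => ((hu r hr).sub ((hasDerivWithinAt_id r _).const_mul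
        (u' 0))).continuousWithinAt.congr (by intro y hy; simp) (by simp)
    · intro x hx
      rw [hint] at hx ⊢
      have := ((hu x (Set.Ioi_subset_Ici_self hx)).sub ((hasDerivWithinAt_id x _).const_mul
        (u' 0))).mono Set.Ioi_subset_Ici_self
      simpa [mul_comm, Pi.sub_def] using this
    · intro x hx
      rw [hint] at hx
      exact hd x (Set.Ioi_subset_Ici_self hx)
  set R : ℝ := 1 / u' 0 with hR
  have hRpos : 0 < R := by positivity
  have hg := hmonog (Set.self_mem_Ici) (le_of_lt hRpos) (le_of_lt hRpos)
  replace hg : u 0 - u' 0 * 0 ≤ u R - u' 0 * R := hg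
  rw [mul_zero] at hg
  have huR : u R ≥ u 0 + 1 := by
    have hne : u' 0 ≠ 0 := ne_of_gt hpos
    have : u' 0 * R = 1 := by rw [hR]; field_simp
    linarith [hg, this]
  have h0 := (hbnd 0 Set.self_mem_Ici).1
  have h1 := (hbnd R (le_of_lt hRpos)).2
  linarith
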